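/- Let D be a division ring whose center F is uncountable, let K be a division subring of D containing F, and let N be a normal subgroup of the multiplicative group D*. If N is non-central, then every element of N is right algebraic over K if and only if every element of D is right algebraic over K. -/

import Mathlib

set_option synthInstance.maxHeartbeats 1000000
set_option maxHeartbeats 2000000

/-- `a` is right algebraic over the division subring `K` of `D`. -/
def IsRightAlgebraicOver {D : Type*} [DivisionRing D] (K : Subring D) (a : D) : Prop :=
  ∃ (m : ℕ) (c : ℕ → D), (∀ i, c i ∈ K) ∧ (∃ i ≤ m, c i ≠ 0) ∧
    ∑ i ∈ Finset.range (m + 1), a ^ i * c i = 0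

section Aux

open MulOpposite

variable {D : Type*} [DivisionRing D]

lemma isRightAlgebraicOver_of_mem (K : Subring D) {x : D} (hx : x ∈ K) :
    IsRightAlgebraicOver K x := by
  refine ⟨1, fun i => if i = 0 then -x else if i = 1 then 1 else 0, ?_, ⟨1, le_refl 1, by simp⟩, ?_⟩
  · intro i
    by_cases h0 : i = 0 <;> by_cases h1 : i = 1 <;>
      simp [h0, h1, K.neg_mem hx, K.one_mem, K.zero_mem]
  · simp [Finset.sum_range_succ]

lemma add_central_ne_zero (K : Subring D) (hFK : Subring.center D ≤ K) {a : D}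
    (ha : ¬ IsRightAlgebraicOver K a) {μ : D} (hμ : μ ∈ Subring.center D) :
    a + μ ≠ 0 := by
  intro h
  have : a = -μ := by linear_combination (norm := noncomm_ring) h
  exact ha (this ▸ isRightAlgebraicOver_of_mem K (K.neg_mem (hFK hμ)))

lemma central_comm {μ : D} (hμ : μ ∈ Subring.center D) (x : D) : μ * x = x * μ :=
  ((Subring.mem_center_iff.1 hμ) x).symm

lemma key_indep (K : Subring D) (hFK : Subring.center D ≤ K) {a : D}
    (ha : ¬ IsRightAlgebraicOver K a) :
    ∀ (r : ℕ) (lam : Fin r → D), (∀ j, lam j ∈ Subring.center D) → Function.Injective lam →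
    ∀ (N : ℕ) (c : ℕ → D), (∀ i, c i ∈ K) → (∀ i, N < i → c i = 0) →
    ∀ (k : Fin r → D), (∀ j, k j ∈ K) →
    ((∑ i ∈ Finset.range (N + 1), a ^ i * c i) + ∑ j, (a + lam j)⁻¹ * k j = 0) →
    (∀ i, c i = 0) ∧ (∀ j, k j = 0) := by
  intro r
  induction r with
  | zero =>
    intro lam _ _ N c hcK hctop k _ hsum
    rw [Finset.univ_eq_empty, Finset.sum_empty, add_zero] at hsum
    have hc : ∀ i, c i = 0 := by
      by_contra h
      push_neg at h
      obtain ⟨i, hi⟩ := h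
      have hiN : i ≤ N := by
        by_contra h'
        exact hi (hctop i (lt_of_not_ge h'))
      exact ha ⟨N, c, hcK, ⟨i, hiN, hi⟩, hsum⟩
    exact ⟨hc, fun j => j.elim0⟩
  | succ r IH =>
    intro lam hlamC hlaminj N c hcK hctop k hkK hsum
    set μ := lam (Fin.last r) with hμdef
    have hμC : μ ∈ Subring.center D := hlamC _
    have hμK : μ ∈ K := hFK hμC
    have hA : ∀ j, a + lam j ≠ 0 := fun j => add_central_ne_zero K hFK ha (hlamC j)
    set c' : ℕ → D := fun i => (if i = 0 then ∑ j, k j else c (i - 1)) + μ * c i with hc'def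
    set lam' : Fin r → D := fun j => lam j.castSucc with hlam'def
    set k' : Fin r → D := fun j => (μ - lam j.castSucc) * k j.castSucc with hk'def
    have hsum' : (∑ i ∈ Finset.range (N + 2), a ^ i * c' i) +
        ∑ j, (a + lam' j)⁻¹ * k' j = 0 := by
      have expand1 : ∑ i ∈ Finset.range (N + 2), a ^ i * c' i
          = (∑ j, k j) + ((a + μ) * ∑ i ∈ Finset.range (N + 1), a ^ i * c i) := by
        have h1 : ∑ i ∈ Finset.range (N + 2), a ^ i * c' i
            = (∑ i ∈ Finset.range (N + 2), a ^ i * (if i = 0 then ∑ j, k j else c (i - 1)))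
              + ∑ i ∈ Finset.range (N + 2), a ^ i * (μ * c i) := by
          rw [← Finset.sum_add_distrib]
          exact Finset.sum_congr rfl fun i _ => mul_add _ _ _
        have h2 : ∑ i ∈ Finset.range (N + 2), a ^ i * (if i = 0 then ∑ j, k j else c (i - 1))
            = (∑ i ∈ Finset.range (N + 1), a ^ (i + 1) * c i) + ∑ j, k j := by
          rw [Finset.sum_range_succ' (fun i => a ^ i * (if i = 0 then ∑ j, k j else c (i - 1)))]
          simp
        have h3 : ∑ i ∈ Finset.range (N + 2), a ^ i * (μ * c i)
            = ∑ i ∈ Finset.range (N + 1), a ^ i * (μ * c i) := by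
          rw [Finset.sum_range_succ]
          rw [hctop (N + 1) (by omega), mul_zero, mul_zero, add_zero]
        rw [h1, h2, h3, add_mul, Finset.mul_sum, Finset.mul_sum]
        have h4 : ∀ i, a * (a ^ i * c i) = a ^ (i + 1) * c i := fun i => by
          rw [pow_succ', mul_assoc]
        have h5 : ∀ i, μ * (a ^ i * c i) = a ^ i * (μ * c i) := fun i => by
          rw [← mul_assoc, central_comm hμC (a ^ i), mul_assoc]
        simp_rw [h4, h5]
        abel
      have expand2 : ∑ j, (a + lam' j)⁻¹ * k' j
          = ((a + μ) * ∑ j, (a + lam j)⁻¹ * k j) - ∑ j, k j := by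
        have h6 : ∀ j : Fin (r + 1), (a + μ) * ((a + lam j)⁻¹ * k j)
            = k j + (a + lam j)⁻¹ * ((μ - lam j) * k j) := by
          intro j
          have hcen : (μ - lam j) ∈ Subring.center D :=
            Subring.sub_mem _ hμC (hlamC j)
          have hsplit : (a + μ) = (a + lam j) + (μ - lam j) := by abel
          rw [hsplit, add_mul, ← mul_assoc, mul_inv_cancel₀ (hA j), one_mul,
            ← mul_assoc, central_comm hcen ((a + lam j)⁻¹), mul_assoc]
        rw [Finset.mul_sum]
        simp_rw [h6]
        rw [Finset.sum_add_distrib]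
        have h7 : ∑ j : Fin (r + 1), (a + lam j)⁻¹ * ((μ - lam j) * k j)
            = ∑ j : Fin r, (a + lam' j)⁻¹ * k' j := by
          rw [Fin.sum_univ_castSucc
            (fun j => (a + lam j)⁻¹ * ((μ - lam j) * k j))]
          simp [hlam'def, hk'def]
          exact Or.inr (Or.inl (by rw [hμdef, sub_self]))
        rw [h7]
        abel
      rw [expand1, expand2]
      have hre : (∑ j, k j) + ((a + μ) * ∑ i ∈ Finset.range (N + 1), a ^ i * c i)
          + (((a + μ) * ∑ j, (a + lam j)⁻¹ * k j) - ∑ j, k j)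
          = (a + μ) * ((∑ i ∈ Finset.range (N + 1), a ^ i * c i)
              + ∑ j, (a + lam j)⁻¹ * k j) := by
        rw [mul_add]
        abel
      rw [hre, hsum, mul_zero]
    have hc'K : ∀ i, c' i ∈ K := by
      intro i
      rw [hc'def]
      refine K.add_mem ?_ (K.mul_mem hμK (hcK i))
      by_cases h : i = 0
      · rw [if_pos h]; exact sum_mem fun j _ => hkK j
      · rw [if_neg h]; exact hcK _
    have hc'top : ∀ i, N + 1 < i → c' i = 0 := by
      intro i hi
      rw [hc'def]
      simp only
      rw [if_neg (by omega), hctop (i - 1) (by omega), hctop i (by omega), mul_zero, add_zero]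
    obtain ⟨hc'0, hk'0⟩ := IH lam' (fun j => hlamC j.castSucc)
      (fun j₁ j₂ h => Fin.castSucc_injective r (hlaminj h)) (N + 1) c' hc'K hc'top k'
      (fun j => K.mul_mem (K.sub_mem hμK (hFK (hlamC _))) (hkK _)) hsum'
    -- extract k values for castSucc indices
    have hkcast : ∀ j : Fin r, k j.castSucc = 0 := by
      intro j
      have hne : μ - lam j.castSucc ≠ 0 := by
        rw [sub_ne_zero]
        intro h
        exact (Fin.ne_last_of_lt (Fin.castSucc_lt_last j)) (hlaminj h.symm)
      have := hk'0 j
      rw [hk'def] at this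
      rcases mul_eq_zero.1 this with h | h
      · exact absurd h hne
      · exact h
    -- extract c values
    have hcstep : ∀ i, c i = c' (i + 1) - μ * c (i + 1) := by
      intro i
      rw [hc'def]
      simp only [Nat.add_sub_cancel, if_neg (Nat.succ_ne_zero i)]
      abel
    have hcall : ∀ d i, N < i + d → c i = 0 := by
      intro d
      induction d with
      | zero => intro i hi; exact hctop i (by omega)
      | succ d IHd =>
        intro i hi
        by_cases hiN : N < i
        · exact hctop i hiN
        · rw [hcstep i, IHd (i + 1) (by omega), mul_zero, sub_zero, hc'0]
    have hc0 : ∀ i, c i = 0 := fun i => hcall (N + 1) i (by omega)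
    have hklast : k (Fin.last r) = 0 := by
      have h0 := hc'0 0
      rw [hc'def] at h0
      simp only [if_pos rfl] at h0
      rw [hc0 0, mul_zero, add_zero] at h0
      rw [Fin.sum_univ_castSucc] at h0
      have : ∑ j : Fin r, k j.castSucc = 0 := by
        apply Finset.sum_eq_zero
        intro j _
        exact hkcast j
      rw [this, zero_add] at h0
      exact h0
    refine ⟨hc0, fun j => ?_⟩
    rcases Fin.eq_castSucc_or_eq_last j with ⟨j', rfl⟩ | rfl
    · exact hkcast j'
    · exact hklast

/-- If all conjugates of `u` commute with a noncentral element `a`, then `u` is central. -/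
lemma center_of_conj_comm {a u : D} (ha : a ∉ Subring.center D)
    (hcomm : ∀ x : D, x ≠ 0 → x * u * x⁻¹ * a = a * (x * u * x⁻¹)) :
    u ∈ Subring.center D := by
  have hua : u * a = a * u := by
    have := hcomm 1 one_ne_zero
    simpa using this
  -- claim 1 : u commutes with every x not commuting with a
  have claim1 : ∀ x : D, x * a ≠ a * x → u * x = x * u := by
    intro x hx
    have hx0 : x ≠ 0 := by rintro rfl; simp at hx
    have hx1 : (1 : D) + x ≠ 0 := by
      intro h
      have : x = -1 := by linear_combination (norm := noncomm_ring) h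
      rw [this] at hx
      exact hx (by noncomm_ring)
    set c₁ := x * u * x⁻¹ with hc₁def
    set c₂ := (1 + x) * u * (1 + x)⁻¹ with hc₂def
    have hc₁a : c₁ * a = a * c₁ := hcomm x hx0
    have hc₂a : c₂ * a = a * c₂ := hcomm _ hx1
    have e₁ : c₁ * x = x * u := by
      rw [hc₁def, mul_assoc, inv_mul_cancel₀ hx0, mul_one]
    have e₂ : c₂ * (1 + x) = (1 + x) * u := by
      rw [hc₂def, mul_assoc, inv_mul_cancel₀ hx1, mul_one]
    -- c₂ - u = (c₁ - c₂) x
    have e₃ : c₂ - u = (c₁ - c₂) * x := by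
      have h1 : c₂ + c₂ * x = u + x * u := by
        have := e₂
        rw [mul_add, mul_one, add_mul, one_mul] at this
        exact this
      rw [sub_mul]
      linear_combination (norm := noncomm_ring) h1 - e₁
    by_cases hcc : c₁ = c₂
    · -- then c₂ = u, so (1+x) u = u (1+x), so u x = x u
      have hc₂u : c₂ = u := by
        have h := e₃
        rw [hcc, sub_self, zero_mul, sub_eq_zero] at h
        exact h
      rw [hc₂u] at e₂
      linear_combination (norm := noncomm_ring) e₂
    · exfalso
      have hccne : c₁ - c₂ ≠ 0 := sub_ne_zero.2 hcc
      have hxval : x = (c₁ - c₂)⁻¹ * (c₂ - u) := by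
        rw [e₃, ← mul_assoc, inv_mul_cancel₀ hccne, one_mul]
      -- x commutes with a
      apply hx
      have hCa : Commute (c₁ - c₂) a := by
        have h1 : Commute c₁ a := hc₁a
        have h2 : Commute c₂ a := hc₂a
        exact h1.sub_left h2
      have hCinv : Commute (c₁ - c₂)⁻¹ a := hCa.inv_left₀
      have hCu : Commute (c₂ - u) a := (Commute.sub_left hc₂a hua)
      have hxa : Commute x a := by
        rw [hxval]
        exact hCinv.mul_left hCu
      exact hxa
  -- now u commutes with everything
  rw [Subring.mem_center_iff]
  intro g
  obtain ⟨x₀, hx₀⟩ : ∃ x₀ : D, x₀ * a ≠ a * x₀ := by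
    by_contra h
    push_neg at h
    exact ha (Subring.mem_center_iff.2 h)
  by_cases hg : g * a = a * g
  · have hgx : (g + x₀) * a ≠ a * (g + x₀) := by
      intro h
      rw [add_mul, mul_add, hg] at h
      exact hx₀ (by linear_combination (norm := noncomm_ring) h)
    have h1 := claim1 _ hgx
    have h2 := claim1 _ hx₀
    rw [mul_add, add_mul] at h1
    have : u * g = g * u := by linear_combination (norm := noncomm_ring) h1 - h2
    exact this.symm
  · exact (claim1 g hg).symm

/-- From a right-algebraic relation for `1 + z` where `z * y = y * z = 1`, get a
right-algebraic relation (of the same degree) for `y`. -/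
lemma relation_transfer (K : Subring D) {z y : D} (hzy : z * y = 1) (hyz : y * z = 1)
    (halg : IsRightAlgebraicOver K (1 + z)) :
    ∃ (m : ℕ) (e : ℕ → D), (∀ s, e s ∈ K) ∧ (∃ s ≤ m, e s ≠ 0) ∧
      ∑ s ∈ Finset.range (m + 1), y ^ s * e s = 0 := by
  classical
  obtain ⟨m, c, hcK, ⟨i₀, hi₀m, hi₀⟩, hsum⟩ := halg
  -- binomial expansion
  set d : ℕ → D := fun t => ∑ i ∈ Finset.range (m + 1), ((i.choose t : ℕ) : D) * c i with hddef
  have hdK : ∀ t, d t ∈ K := fun t =>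
    sum_mem fun i _ => K.mul_mem (natCast_mem K _) (hcK i)
  have hbin : ∀ i, i ≤ m →
      (1 + z) ^ i = ∑ t ∈ Finset.range (m + 1), z ^ t * ((i.choose t : ℕ) : D) := by
    intro i him
    have h1 : (1 + z) ^ i
        = ∑ t ∈ Finset.range (i + 1), z ^ t * 1 ^ (i - t) * ((i.choose t : ℕ) : D) := by
      rw [add_comm 1 z]
      exact Commute.add_pow (Commute.one_right z) i
    rw [h1]
    have h2 : ∀ t, z ^ t * 1 ^ (i - t) * ((i.choose t : ℕ) : D)
        = z ^ t * ((i.choose t : ℕ) : D) := fun t => by rw [one_pow, mul_one]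
    simp_rw [h2]
    refine Finset.sum_subset (Finset.range_subset_range.2 (by omega)) ?_
    intro t _ ht
    rw [Finset.mem_range, not_lt] at ht
    rw [Nat.choose_eq_zero_of_lt (by omega), Nat.cast_zero, mul_zero]
  have hzsum : ∑ t ∈ Finset.range (m + 1), z ^ t * d t = 0 := by
    calc ∑ t ∈ Finset.range (m + 1), z ^ t * d t
        = ∑ t ∈ Finset.range (m + 1), ∑ i ∈ Finset.range (m + 1),
            z ^ t * (((i.choose t : ℕ) : D) * c i) := by
          simp only [hddef, Finset.mul_sum, mul_assoc]
      _ = ∑ i ∈ Finset.range (m + 1), ∑ t ∈ Finset.range (m + 1),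
            (z ^ t * ((i.choose t : ℕ) : D)) * c i := by
          rw [Finset.sum_comm]
          exact Finset.sum_congr rfl fun i _ => Finset.sum_congr rfl fun t _ => by
            rw [mul_assoc]
      _ = ∑ i ∈ Finset.range (m + 1), (1 + z) ^ i * c i := by
          refine Finset.sum_congr rfl fun i hi => ?_
          rw [hbin i (by have := Finset.mem_range.1 hi; omega), Finset.sum_mul]
      _ = 0 := hsum
  -- nontriviality of d
  have hFs : (Finset.filter (fun i => c i ≠ 0) (Finset.range (m + 1))).Nonempty :=
    ⟨i₀, Finset.mem_filter.2 ⟨Finset.mem_range.2 (by omega), hi₀⟩⟩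
  set i₁ := (Finset.filter (fun i => c i ≠ 0) (Finset.range (m + 1))).max' hFs with hi₁def
  have hi₁mem := (Finset.filter (fun i => c i ≠ 0) (Finset.range (m + 1))).max'_mem hFs
  rw [Finset.mem_filter, Finset.mem_range] at hi₁mem
  obtain ⟨hi₁m, hi₁ne⟩ := hi₁mem
  have hi₁m' : i₁ ≤ m := by omega
  have hd₁ : d i₁ = c i₁ := by
    show ∑ i ∈ Finset.range (m + 1), ((i.choose i₁ : ℕ) : D) * c i = c i₁
    rw [Finset.sum_eq_single i₁]
    · rw [Nat.choose_self, Nat.cast_one, one_mul]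
    · intro b hb hbne
      rcases lt_or_gt_of_ne hbne with h | h
      · rw [Nat.choose_eq_zero_of_lt h, Nat.cast_zero, zero_mul]
      · have : c b = 0 := by
          by_contra hcb
          have : b ≤ i₁ := Finset.le_max' _ b
            (Finset.mem_filter.2 ⟨hb, hcb⟩)
          omega
        rw [this, mul_zero]
    · intro h
      exact absurd (Finset.mem_range.2 (by omega)) h
  have hdne : d i₁ ≠ 0 := hd₁ ▸ hi₁ne
  -- multiply by y^m on the left
  have hyzpow : ∀ t, y ^ t * z ^ t = 1 := by
    intro t
    induction t with
    | zero => simp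
    | succ t IHt =>
      rw [pow_succ, pow_succ']
      calc y ^ t * y * (z * z ^ t) = y ^ t * (y * z) * z ^ t := by
            rw [mul_assoc, mul_assoc, mul_assoc]
        _ = 1 := by rw [hyz, mul_one, IHt]
  have hcancel : ∀ t, t ≤ m → y ^ m * z ^ t = y ^ (m - t) := by
    intro t ht
    have : y ^ m = y ^ (m - t) * y ^ t := by rw [← pow_add, Nat.sub_add_cancel ht]
    rw [this, mul_assoc, hyzpow t, mul_one]
  have hysum : ∑ t ∈ Finset.range (m + 1), y ^ (m - t) * d t = 0 := by
    have h := congrArg (fun w => y ^ m * w) hzsum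
    simp only [mul_zero] at h
    rw [Finset.mul_sum] at h
    calc ∑ t ∈ Finset.range (m + 1), y ^ (m - t) * d t
        = ∑ t ∈ Finset.range (m + 1), y ^ m * (z ^ t * d t) := by
          refine Finset.sum_congr rfl fun t ht => ?_
          rw [← mul_assoc, hcancel t (by
            have := Finset.mem_range.1 ht; omega)]
      _ = 0 := h
  refine ⟨m, fun s => d (m - s), fun s => hdK _, ⟨m - i₁, by omega, by
    show d (m - (m - i₁)) ≠ 0
    rw [Nat.sub_sub_self hi₁m']; exact hdne⟩, ?_⟩
  have := Finset.sum_range_reflect (fun t => y ^ (m - t) * d t) (m + 1)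
  rw [hysum] at this
  rw [← this]
  refine Finset.sum_congr rfl fun j hj => ?_
  have hjm : j ≤ m := by have := Finset.mem_range.1 hj; omega
  have : m + 1 - 1 - j = m - j := by omega
  rw [this, Nat.sub_sub_self hjm]

/-- Finsets of boolean lists of length at most `n`. -/
def LsF : ℕ → Finset (List Bool)
  | 0 => {[]}
  | n + 1 => LsF n ∪ (LsF n).image (List.cons true) ∪ (LsF n).image (List.cons false)

lemma LsF_mono {j : ℕ} : LsF j ⊆ LsF (j + 1) := fun l hl =>
  Finset.mem_union.2 (Or.inl (Finset.mem_union.2 (Or.inl hl)))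

lemma LsF_mono' : ∀ {j j' : ℕ}, j ≤ j' → LsF j ⊆ LsF j' := by
  intro j j' h
  induction j' with
  | zero => have : j = 0 := by omega
            subst this; exact Finset.Subset.refl _
  | succ j' IH =>
    rcases Nat.lt_or_ge j (j' + 1) with h' | h'
    · exact (IH (by omega)).trans LsF_mono
    · have : j = j' + 1 := by omega
      subst this; exact Finset.Subset.refl _

lemma nil_mem_LsF : ∀ n, [] ∈ LsF n
  | 0 => Finset.mem_singleton_self []
  | n + 1 => LsF_mono (nil_mem_LsF n)

lemma cons_mem_LsF {n : ℕ} {l : List Bool} (b : Bool) (hl : l ∈ LsF n) :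
    b :: l ∈ LsF (n + 1) := by
  cases b
  · exact Finset.mem_union.2 (Or.inr (Finset.mem_image_of_mem _ hl))
  · exact Finset.mem_union.2 (Or.inl (Finset.mem_union.2 (Or.inr (Finset.mem_image_of_mem _ hl))))

/-- The word in `A`, `B` indexed by a list of booleans. -/
def Wrd (A B : D) : List Bool → D := fun l => (l.map (fun b => if b then A else B)).prod

lemma Wrd_nil (A B : D) : Wrd A B [] = 1 := rfl

lemma Wrd_cons (A B : D) (b : Bool) (l : List Bool) :
    Wrd A B (b :: l) = (if b then A else B) * Wrd A B l := by
  simp [Wrd]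

lemma op_z_mem_span (K : Subring D) (hKinv : ∀ x ∈ K, x⁻¹ ∈ K)
    (hFK : Subring.center D ≤ K) {a δ : D} (hδ : δ ≠ 0) {lv : D}
    (hlvC : lv ∈ Subring.center D) (hne : a + lv ≠ 0) {n : ℕ} {e : ℕ → D}
    (heK : ∀ s, e s ∈ K) (hex : ∃ s ≤ n, e s ≠ 0)
    (hrel : ∑ s ∈ Finset.range (n + 1), ((a + lv) * δ⁻¹) ^ s * e s = 0) :
    op (δ * (a + lv)⁻¹) ∈ Submodule.span ↥K.op
      ((fun l => op (Wrd (a * δ⁻¹) δ⁻¹ l)) '' ↑(LsF n)) := by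
  classical
  set A := a * δ⁻¹ with hAdef
  set B := δ⁻¹ with hBdef
  set y := (a + lv) * δ⁻¹ with hydef
  set z := δ * (a + lv)⁻¹ with hzdef
  have hyz : y * z = 1 := by
    rw [hydef, hzdef, mul_assoc, ← mul_assoc δ⁻¹ δ, inv_mul_cancel₀ hδ, one_mul,
      mul_inv_cancel₀ hne]
  have hzy : z * y = 1 := by
    rw [hydef, hzdef, mul_assoc, ← mul_assoc (a + lv)⁻¹, inv_mul_cancel₀ hne, one_mul,
      mul_inv_cancel₀ hδ]
  have hy0 : y ≠ 0 := fun h => by rw [h, zero_mul] at hyz; exact one_ne_zero hyz.symm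
  have hstep : ∀ j, op (y ^ j) ∈ Submodule.span ↥K.op
      ((fun l => op (Wrd A B l)) '' ↑(LsF j)) := by
    intro j
    induction j with
    | zero =>
      rw [pow_zero, ← Wrd_nil A B]
      exact Submodule.subset_span ⟨[], Finset.mem_coe.2 (nil_mem_LsF 0), rfl⟩
    | succ j IHj =>
      let φ : Dᵐᵒᵖ →ₗ[↥K.op] Dᵐᵒᵖ :=
        { toFun := fun v => v * op y
          map_add' := fun u v => add_mul u v (op y)
          map_smul' := fun s v => by
            show (s • v) * op y = s • (v * op y)
            show ((s : Dᵐᵒᵖ) * v) * op y = (s : Dᵐᵒᵖ) * (v * op y)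
            exact mul_assoc _ _ _ }
      have hφval : op (y ^ (j + 1)) = φ (op (y ^ j)) := by
        show op (y ^ (j + 1)) = op (y ^ j) * op y
        rw [← op_mul, ← pow_succ']
      rw [hφval]
      have hmem := Submodule.mem_map_of_mem (f := φ) IHj
      rw [Submodule.map_span] at hmem
      refine Submodule.span_le.2 ?_ hmem
      rintro x ⟨x', ⟨l, hl, rfl⟩, rfl⟩
      show op (Wrd A B l) * op y ∈ _
      rw [← op_mul]
      have hy' : y = A + lv * B := by rw [hydef, hAdef, hBdef, add_mul]
      have hyw : y * Wrd A B l = Wrd A B (true :: l) + (Wrd A B (false :: l)) * lv := by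
        rw [Wrd_cons, Wrd_cons, if_pos rfl, if_neg (by simp), hy', add_mul,
          mul_assoc lv B (Wrd A B l), central_comm hlvC (B * Wrd A B l)]
      rw [hyw, op_add, op_mul]
      refine Submodule.add_mem _ ?_ ?_
      · exact Submodule.subset_span ⟨true :: l, Finset.mem_coe.2 (cons_mem_LsF _ hl), rfl⟩
      · have hsm : op lv * op (Wrd A B (false :: l))
            = (⟨op lv, Subring.mem_op.2 (hFK hlvC)⟩ : ↥K.op) • op (Wrd A B (false :: l)) := rfl
        rw [hsm]
        exact Submodule.smul_mem _ _
          (Submodule.subset_span ⟨false :: l, Finset.mem_coe.2 (cons_mem_LsF _ hl), rfl⟩)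
  -- extract minimal nonzero coefficient
  obtain ⟨sw, hswn, hsw⟩ := hex
  have hFs : (Finset.filter (fun s => e s ≠ 0) (Finset.range (n + 1))).Nonempty :=
    ⟨sw, Finset.mem_filter.2 ⟨Finset.mem_range.2 (by omega), hsw⟩⟩
  set s₀ := (Finset.filter (fun s => e s ≠ 0) (Finset.range (n + 1))).min' hFs with hs₀def
  have hs₀mem := (Finset.filter (fun s => e s ≠ 0) (Finset.range (n + 1))).min'_mem hFs
  rw [Finset.mem_filter, Finset.mem_range] at hs₀mem
  obtain ⟨hs₀n, hs₀ne⟩ := hs₀mem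
  have hs₀n' : s₀ ≤ n := by omega
  have hmin : ∀ s, s < s₀ → e s = 0 := by
    intro s hs
    by_contra hsne
    have : s₀ ≤ s := Finset.min'_le _ s
      (Finset.mem_filter.2 ⟨Finset.mem_range.2 (by omega), hsne⟩)
    omega
  -- kill the initial zero part of the relation
  have hsplit : ∑ s ∈ Finset.range (n + 1), y ^ s * e s
      = ∑ s ∈ Finset.Ico s₀ (n + 1), y ^ s * e s := by
    rw [Finset.range_eq_Ico, ← Finset.sum_Ico_consecutive _ (Nat.zero_le s₀) (by omega)]
    have : ∑ s ∈ Finset.Ico 0 s₀, y ^ s * e s = 0 :=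
      Finset.sum_eq_zero fun s hs => by
        rw [hmin s (Finset.mem_Ico.1 hs).2, mul_zero]
    rw [this, zero_add]
  have h2 : ∑ s ∈ Finset.range (n + 1 - s₀), y ^ (s₀ + s) * e (s₀ + s) = 0 := by
    have h2' := hrel
    rw [hsplit, Finset.sum_Ico_eq_sum_range] at h2'
    exact h2'
  have h3 : y ^ s₀ * ∑ s ∈ Finset.range (n + 1 - s₀), y ^ s * e (s₀ + s) = 0 := by
    rw [Finset.mul_sum, ← h2]
    refine Finset.sum_congr rfl fun s _ => ?_
    rw [← mul_assoc, ← pow_add]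
  have h4 : ∑ s ∈ Finset.range (n + 1 - s₀), y ^ s * e (s₀ + s) = 0 := by
    rcases mul_eq_zero.1 h3 with h | h
    · exact absurd h (pow_ne_zero _ hy0)
    · exact h
  have hn1 : n + 1 - s₀ = (n - s₀) + 1 := by omega
  rw [hn1, Finset.sum_range_succ'] at h4
  simp only [pow_zero, one_mul, add_zero] at h4
  -- h4 : ∑ s ∈ range (n - s₀), y ^ (s+1) * e (s₀ + (s+1)) + e s₀ = 0
  set W : D := ∑ s ∈ Finset.range (n - s₀), y ^ s * e (s₀ + s + 1) with hWdef
  have hyW : y * W + e s₀ = 0 := by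
    rw [hWdef, Finset.mul_sum, ← h4]
    congr 1
    refine Finset.sum_congr rfl fun s _ => ?_
    rw [← mul_assoc, ← pow_succ', show s₀ + s + 1 = s₀ + (s + 1) from by omega]
  have hzval : z = -(W * (e s₀)⁻¹) := by
    have h5 : z * (y * W + e s₀) = 0 := by rw [hyW, mul_zero]
    rw [mul_add, ← mul_assoc, hzy, one_mul] at h5
    have h6 : W = -(z * e s₀) := by linear_combination (norm := noncomm_ring) h5
    rw [h6]
    rw [neg_mul, neg_neg, mul_assoc, mul_inv_cancel₀ hs₀ne, mul_one]
  rw [hzval]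
  rw [op_neg, op_mul]
  refine Submodule.neg_mem _ ?_
  have hsm2 : op (e s₀)⁻¹ * op W
      = (⟨op (e s₀)⁻¹, Subring.mem_op.2 (hKinv _ (heK s₀))⟩ : ↥K.op) • op W := rfl
  rw [hsm2]
  refine Submodule.smul_mem _ _ ?_
  rw [hWdef]
  have hops : op (∑ s ∈ Finset.range (n - s₀), y ^ s * e (s₀ + s + 1))
      = ∑ s ∈ Finset.range (n - s₀), op (y ^ s * e (s₀ + s + 1)) :=
    map_sum (opAddEquiv : D ≃+ Dᵐᵒᵖ) _ _
  rw [hops]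
  refine Submodule.sum_mem _ fun s hs => ?_
  rw [op_mul]
  have hsm3 : op (e (s₀ + s + 1)) * op (y ^ s)
      = (⟨op (e (s₀ + s + 1)), Subring.mem_op.2 (heK _)⟩ : ↥K.op) • op (y ^ s) := rfl
  rw [hsm3]
  refine Submodule.smul_mem _ _ ?_
  have hsn : s ≤ n := by
    have := Finset.mem_range.1 hs
    omega
  exact Submodule.span_mono
    (Set.image_mono (Finset.coe_subset.2 (LsF_mono' hsn))) (hstep s)
end Aux

/-- Let `D` be a division ring whose center is uncountable, `K` a division subring of `D`
containing the center, and `N` a non-central normal subgroup of `Dˣ`.  Then every element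
of `N` is right algebraic over `K` iff every element of `D` is right algebraic over `K`. -/
theorem normalSubgroup_rightAlgebraic_iff_rightAlgebraic
    {D : Type*} [DivisionRing D] [Uncountable (Subring.center D)]
    (K : Subring D) (hKinv : ∀ x ∈ K, x⁻¹ ∈ K) (hFK : Subring.center D ≤ K)
    (N : Subgroup Dˣ) (hNnorm : N.Normal)
    (hN : ∃ u ∈ N, (u : D) ∉ Subring.center D) :
    (∀ u ∈ N, IsRightAlgebraicOver K (u : D)) ↔ ∀ a : D, IsRightAlgebraicOver K a := by
  classical
  open MulOpposite in
  constructor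
  case mpr => exact fun h u _ => h u
  intro hNalg a
  by_contra hna
  have hanc : a ∉ Subring.center D := fun h => hna (isRightAlgebraicOver_of_mem K (hFK h))
  obtain ⟨u₀, hu₀N, hu₀nc⟩ := hN
  -- find a conjugate of u₀ not commuting with a
  have hexu : ∃ x : D, x ≠ 0 ∧ ¬ (x * ↑u₀ * x⁻¹ * a = a * (x * ↑u₀ * x⁻¹)) := by
    by_contra h
    push_neg at h
    exact hu₀nc (center_of_conj_comm hanc (fun x hx => h x hx))
  obtain ⟨x, hx0, hxnc⟩ := hexu
  set xu : Dˣ := Units.mk0 x hx0 with hxudef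
  set w : Dˣ := xu * u₀ * xu⁻¹ with hwdef
  have hwN : w ∈ N := hNnorm.conj_mem u₀ hu₀N xu
  have hwval : (w : D) = x * ↑u₀ * x⁻¹ := by
    rw [hwdef, Units.val_mul, Units.val_mul, Units.val_inv_eq_inv_val, hxudef, Units.val_mk0]
  set g : D := (w : D) with hgdef
  have hg0 : g ≠ 0 := Units.ne_zero w
  have hgnc : ¬ (g * a = a * g) := by rw [hwval]; exact hxnc
  set δ : D := g⁻¹ * a * g - a with hδdef
  have hδ : δ ≠ 0 := by
    intro h
    apply hgnc
    have h1 : g⁻¹ * a * g = a := by rwa [hδdef, sub_eq_zero] at h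
    have h2 := congrArg (fun t => g * t) h1
    rw [← mul_assoc, ← mul_assoc, mul_inv_cancel₀ hg0, one_mul] at h2
    exact h2.symm
  have hAne : ∀ lv : ↥(Subring.center D), a + ↑lv ≠ 0 :=
    fun lv => add_central_ne_zero K hFK hna lv.2
  -- each 1 + δ(a+λ)⁻¹ is the value of an element of N, hence right algebraic
  have halg1 : ∀ lv : ↥(Subring.center D),
      IsRightAlgebraicOver K (1 + δ * (a + ↑lv)⁻¹) := by
    intro lv
    set t : Dˣ := Units.mk0 (a + ↑lv) (hAne lv) with htdef
    have hmem : w⁻¹ * (t * w * t⁻¹) ∈ N :=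
      N.mul_mem (N.inv_mem hwN) (hNnorm.conj_mem w hwN t)
    have hval : ((w⁻¹ * (t * w * t⁻¹) : Dˣ) : D) = 1 + δ * (a + ↑lv)⁻¹ := by
      rw [Units.val_mul, Units.val_mul, Units.val_mul, Units.val_inv_eq_inv_val,
        Units.val_inv_eq_inv_val, htdef, Units.val_mk0, ← hgdef]
      have hcen : g⁻¹ * ((a + ↑lv) * g * (a + ↑lv)⁻¹)
          = (g⁻¹ * (a + ↑lv) * g) * (a + ↑lv)⁻¹ := by
        rw [mul_assoc, mul_assoc, mul_assoc]
      rw [hcen]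
      have hmid : g⁻¹ * (a + ↑lv) * g = (a + ↑lv) + δ := by
        rw [mul_add, add_mul]
        have : g⁻¹ * ↑lv * g = ↑lv := by
          rw [mul_assoc, central_comm lv.2 g, ← mul_assoc, inv_mul_cancel₀ hg0, one_mul]
        rw [this, hδdef]
        abel
      rw [hmid, add_mul, mul_inv_cancel₀ (hAne lv)]
    rw [← hval]
    exact hNalg _ hmem
  -- transfer to relations for y = (a+λ)δ⁻¹
  have hrel : ∀ lv : ↥(Subring.center D), ∃ (m : ℕ) (e : ℕ → D), (∀ s, e s ∈ K) ∧
      (∃ s ≤ m, e s ≠ 0) ∧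
      ∑ s ∈ Finset.range (m + 1), ((a + ↑lv) * δ⁻¹) ^ s * e s = 0 := by
    intro lv
    have hzy : (δ * (a + ↑lv)⁻¹) * ((a + ↑lv) * δ⁻¹) = 1 := by
      rw [mul_assoc, ← mul_assoc (a + ↑lv)⁻¹, inv_mul_cancel₀ (hAne lv), one_mul,
        mul_inv_cancel₀ hδ]
    have hyz : ((a + ↑lv) * δ⁻¹) * (δ * (a + ↑lv)⁻¹) = 1 := by
      rw [mul_assoc, ← mul_assoc δ⁻¹, inv_mul_cancel₀ hδ, one_mul,
        mul_inv_cancel₀ (hAne lv)]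
    exact relation_transfer K hzy hyz (halg1 lv)
  -- pigeonhole on the degree
  set T : ℕ → Set ↥(Subring.center D) := fun m =>
    {lv | ∃ e : ℕ → D, (∀ s, e s ∈ K) ∧ (∃ s ≤ m, e s ≠ 0) ∧
      ∑ s ∈ Finset.range (m + 1), ((a + ↑lv) * δ⁻¹) ^ s * e s = 0} with hTdef
  have hcover : ∀ lv, ∃ m, lv ∈ T m := by
    intro lv
    obtain ⟨m, e, h1, h2, h3⟩ := hrel lv
    exact ⟨m, e, h1, h2, h3⟩
  have hinf : ∃ n, (T n).Infinite := by
    by_contra h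
    push_neg at h
    have hcnt : (Set.univ : Set ↥(Subring.center D)).Countable := by
      have hsub : (Set.univ : Set ↥(Subring.center D)) ⊆ ⋃ m, T m :=
        fun lv _ => Set.mem_iUnion.2 (hcover lv)
      exact (Set.countable_iUnion (fun m => (h m).countable)).mono hsub
    rw [Set.countable_univ_iff] at hcnt
    exact not_countable hcnt
  obtain ⟨n, hTn⟩ := hinf
  -- the finite word set
  set SF : Finset Dᵐᵒᵖ := (LsF n).image (fun l => op (Wrd (a * δ⁻¹) δ⁻¹ l)) with hSFdef
  set M := SF.card with hMdef
  -- choose M+1 distinct central elements from T n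
  obtain ⟨tset, htsub, htfin, htcard⟩ := hTn.exists_subset_ncard_eq (M + 1)
  have htfcard : htfin.toFinset.card = M + 1 := by
    rw [← Set.ncard_eq_toFinset_card tset htfin, htcard]
  set lamf : Fin (M + 1) → ↥(Subring.center D) :=
    fun j => ↑(htfin.toFinset.equivFin.symm (finCongr htfcard.symm j)) with hlamfdef
  have hlamf_inj : Function.Injective lamf := by
    intro j₁ j₂ h
    have := Subtype.ext h
    have := htfin.toFinset.equivFin.symm.injective this
    exact (finCongr htfcard.symm).injective this
  have hlamf_mem : ∀ j, lamf j ∈ T n := by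
    intro j
    apply htsub
    rw [← htfin.mem_toFinset]
    exact (htfin.toFinset.equivFin.symm (finCongr htfcard.symm j)).2
  -- span membership
  have hspanmem : ∀ j, op (δ * (a + ↑(lamf j))⁻¹) ∈
      Submodule.span ↥K.op ((SF : Finset Dᵐᵒᵖ) : Set Dᵐᵒᵖ) := by
    intro j
    obtain ⟨e, heK, hex, hrel'⟩ := hlamf_mem j
    have h := op_z_mem_span K hKinv hFK hδ (lamf j).2 (hAne _) heK hex hrel'
    rw [hSFdef, Finset.coe_image]
    exact h
  -- division ring structure on the opposite subring
  letI : DivisionRing ↥K.op :=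
    { (inferInstance : Ring ↥K.op) with
      inv := fun y => ⟨y⁻¹, by
        rw [Subring.mem_op, MulOpposite.unop_inv]
        exact hKinv _ y.2⟩
      mul_inv_cancel := fun b hb => by
        have : (b : Dᵐᵒᵖ) ≠ 0 := fun h => hb (Subtype.ext h)
        exact Subtype.ext (mul_inv_cancel₀ this)
      inv_zero := Subtype.ext inv_zero
      qsmul := _
      nnqsmul := _ }
  haveI : FiniteDimensional ↥K.op (Submodule.span ↥K.op ((SF : Finset Dᵐᵒᵖ) : Set Dᵐᵒᵖ)) :=
    FiniteDimensional.span_of_finite _ SF.finite_toSet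
  set Sp := Submodule.span ↥K.op ((SF : Finset Dᵐᵒᵖ) : Set Dᵐᵒᵖ) with hSpdef
  have hrank : Module.finrank ↥K.op Sp ≤ M := finrank_span_finset_le_card SF
  have hnli : ¬ LinearIndependent ↥K.op
      (fun j : Fin (M + 1) => (⟨op (δ * (a + ↑(lamf j))⁻¹), hspanmem j⟩ : ↥Sp)) := by
    intro hli
    have := hli.fintype_card_le_finrank
    rw [Fintype.card_fin] at this
    omega
  obtain ⟨gc, hgc0, j₀, hj₀⟩ := Fintype.not_linearIndependent_iff.1 hnli
  -- push the relation down to D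
  have hgc1 : ∑ j : Fin (M + 1), (gc j : Dᵐᵒᵖ) * op (δ * (a + ↑(lamf j))⁻¹) = 0 := by
    have h := congrArg (Subtype.val : ↥Sp → Dᵐᵒᵖ) hgc0
    rw [AddSubmonoidClass.coe_finset_sum] at h
    simpa [Subring.smul_def] using h
  have hgc2 : ∑ j : Fin (M + 1), (δ * (a + ↑(lamf j))⁻¹) * ((gc j : Dᵐᵒᵖ)).unop = 0 := by
    have h := congrArg (opAddEquiv : D ≃+ Dᵐᵒᵖ).symm hgc1
    rw [map_sum] at h
    simp only [opAddEquiv_symm_apply, unop_mul, unop_op, map_zero] at h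
    exact h
  have hgc3 : ∑ j : Fin (M + 1), (a + ↑(lamf j))⁻¹ * ((gc j : Dᵐᵒᵖ)).unop = 0 := by
    have h : δ * ∑ j : Fin (M + 1), (a + ↑(lamf j))⁻¹ * ((gc j : Dᵐᵒᵖ)).unop = 0 := by
      rw [Finset.mul_sum, ← hgc2]
      exact Finset.sum_congr rfl fun j _ => by rw [← mul_assoc]
    rcases mul_eq_zero.1 h with h' | h'
    · exact absurd h' hδ
    · exact h'
  -- contradiction via the independence lemma
  have hfinal := key_indep K hFK hna (M + 1) (fun j => ↑(lamf j))
    (fun j => (lamf j).2)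
    (fun j₁ j₂ h => hlamf_inj (Subtype.ext h))
    0 (fun _ => 0) (fun _ => K.zero_mem) (fun _ _ => rfl)
    (fun j => ((gc j : Dᵐᵒᵖ)).unop)
    (fun j => Subring.mem_op.1 (gc j).2)
    (by
      rw [Finset.sum_congr rfl (fun i _ => mul_zero ((a : D) ^ i)), Finset.sum_const_zero,
        zero_add]
      exact hgc3)
  have : ((gc j₀ : Dᵐᵒᵖ)).unop = 0 := hfinal.2 j₀
  apply hj₀
  ext
  exact (MulOpposite.unop_eq_zero_iff _).1 this
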